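/- Let κ ∈ (4,6]. Define G : 𝒳₂ → ℝ by G(θ₁,θ₂) = (sin((θ₂−θ₁)/2))^(1−6/κ) · (sin((θ₂−θ₁)/4))^(8/κ−1). Then G is positive on 𝒳₂ and satisfies the radial BPZ system with constant ℵ = (16−κ²)/(32κ); that is, for each j ∈ {1,2}, with ℓ the other index, (κ/2)·∂ⱼ²G(θ₁,θ₂) + cot((θ_ℓ−θ_j)/2)·∂_ℓG(θ₁,θ₂) − ((6−κ)/(4κ))·G(θ₁,θ₂)/sin²((θ_ℓ−θ_j)/2) = ((16−κ²)/(32κ))·G(θ₁,θ₂) on 𝒳₂. -/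

import Mathlib

open Real Set

/-- First partial derivative of `Z` in its first variable. -/
noncomputable def pderiv1 (Z : ℝ → ℝ → ℝ) (θ₁ θ₂ : ℝ) : ℝ :=
  deriv (fun s => Z s θ₂) θ₁

/-- First partial derivative of `Z` in its second variable. -/
noncomputable def pderiv2 (Z : ℝ → ℝ → ℝ) (θ₁ θ₂ : ℝ) : ℝ :=
  deriv (fun s => Z θ₁ s) θ₂

/-- Second partial derivative of `Z` in its first variable. -/
noncomputable def pderiv11 (Z : ℝ → ℝ → ℝ) (θ₁ θ₂ : ℝ) : ℝ :=
  deriv (fun s => pderiv1 Z s θ₂) θ₁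

/-- Second partial derivative of `Z` in its second variable. -/
noncomputable def pderiv22 (Z : ℝ → ℝ → ℝ) (θ₁ θ₂ : ℝ) : ℝ :=
  deriv (fun s => pderiv2 Z θ₁ s) θ₂

/-- `Z` satisfies the radial BPZ system with constant `ℵ` on
`𝒳₂ = {(θ₁, θ₂) : θ₁ < θ₂ < θ₁ + 2π}`. -/
def RadialBPZ₂ (κ ℵ : ℝ) (Z : ℝ → ℝ → ℝ) : Prop :=
  ∀ θ₁ θ₂ : ℝ, θ₁ < θ₂ → θ₂ < θ₁ + 2 * π →
    (κ / 2 * pderiv11 Z θ₁ θ₂ + Real.cot ((θ₂ - θ₁) / 2) * pderiv2 Z θ₁ θ₂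
        - (6 - κ) / (4 * κ) * Z θ₁ θ₂ / Real.sin ((θ₂ - θ₁) / 2) ^ 2
      = ℵ * Z θ₁ θ₂)
    ∧ (κ / 2 * pderiv22 Z θ₁ θ₂ + Real.cot ((θ₁ - θ₂) / 2) * pderiv1 Z θ₁ θ₂
        - (6 - κ) / (4 * κ) * Z θ₁ θ₂ / Real.sin ((θ₁ - θ₂) / 2) ^ 2
      = ℵ * Z θ₁ θ₂)

/-- The one-variable profile `g(x) = sin(x/2)^a · sin(x/4)^b` (real powers). -/
noncomputable def gg (a b x : ℝ) : ℝ :=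
  Real.sin (x / 2) ^ a * Real.sin (x / 4) ^ b

/-- The first derivative of `gg`. -/
noncomputable def gg1 (a b x : ℝ) : ℝ :=
  Real.cos (x / 2) * Real.sin (x / 2) ^ (a - 1) * Real.sin (x / 4) ^ b * (a / 2)
    + Real.cos (x / 4) * Real.sin (x / 2) ^ a * Real.sin (x / 4) ^ (b - 1) * (b / 4)

/-- The second derivative of `gg`. -/
noncomputable def gg2 (a b x : ℝ) : ℝ :=
  a * (a - 1) / 4 * Real.cos (x / 2) ^ 2 * Real.sin (x / 2) ^ (a - 1 - 1) * Real.sin (x / 4) ^ b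
    - a / 4 * Real.sin (x / 2) * Real.sin (x / 2) ^ (a - 1) * Real.sin (x / 4) ^ b
    + a * b / 4 * Real.cos (x / 2) * Real.cos (x / 4) * Real.sin (x / 2) ^ (a - 1)
        * Real.sin (x / 4) ^ (b - 1)
    - b / 16 * Real.sin (x / 4) * Real.sin (x / 2) ^ a * Real.sin (x / 4) ^ (b - 1)
    + b * (b - 1) / 16 * Real.cos (x / 4) ^ 2 * Real.sin (x / 2) ^ a
        * Real.sin (x / 4) ^ (b - 1 - 1)

lemma half_deriv (x : ℝ) : HasDerivAt (fun y : ℝ => y / 2) (1 / 2) x := by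
  simpa using (hasDerivAt_id x).div_const 2

lemma quarter_deriv (x : ℝ) : HasDerivAt (fun y : ℝ => y / 4) (1 / 4) x := by
  simpa using (hasDerivAt_id x).div_const 4

lemma hasDerivAt_gg (a b : ℝ) {x : ℝ} (hS : Real.sin (x / 2) ≠ 0)
    (hT : Real.sin (x / 4) ≠ 0) : HasDerivAt (fun y => gg a b y) (gg1 a b x) x := by
  have p2 : HasDerivAt (fun y => Real.sin (y / 2) ^ a)
      (Real.cos (x / 2) * (1 / 2) * a * Real.sin (x / 2) ^ (a - 1)) x :=
    ((half_deriv x).sin).rpow_const (Or.inl hS)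
  have p4 : HasDerivAt (fun y => Real.sin (y / 4) ^ b)
      (Real.cos (x / 4) * (1 / 4) * b * Real.sin (x / 4) ^ (b - 1)) x :=
    ((quarter_deriv x).sin).rpow_const (Or.inl hT)
  have := p2.fun_mul p4
  unfold gg gg1
  exact this.congr_deriv (by ring)

lemma hasDerivAt_gg1 (a b : ℝ) {x : ℝ} (hS : Real.sin (x / 2) ≠ 0)
    (hT : Real.sin (x / 4) ≠ 0) : HasDerivAt (fun y => gg1 a b y) (gg2 a b x) x := by
  have p2 : HasDerivAt (fun y => Real.sin (y / 2) ^ a)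
      (Real.cos (x / 2) * (1 / 2) * a * Real.sin (x / 2) ^ (a - 1)) x :=
    ((half_deriv x).sin).rpow_const (Or.inl hS)
  have p4 : HasDerivAt (fun y => Real.sin (y / 4) ^ b)
      (Real.cos (x / 4) * (1 / 4) * b * Real.sin (x / 4) ^ (b - 1)) x :=
    ((quarter_deriv x).sin).rpow_const (Or.inl hT)
  have p2' : HasDerivAt (fun y => Real.sin (y / 2) ^ (a - 1))
      (Real.cos (x / 2) * (1 / 2) * (a - 1) * Real.sin (x / 2) ^ (a - 1 - 1)) x :=
    ((half_deriv x).sin).rpow_const (Or.inl hS)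
  have p4' : HasDerivAt (fun y => Real.sin (y / 4) ^ (b - 1))
      (Real.cos (x / 4) * (1 / 4) * (b - 1) * Real.sin (x / 4) ^ (b - 1 - 1)) x :=
    ((quarter_deriv x).sin).rpow_const (Or.inl hT)
  have c2 : HasDerivAt (fun y => Real.cos (y / 2)) (-Real.sin (x / 2) * (1 / 2)) x :=
    (half_deriv x).cos
  have c4 : HasDerivAt (fun y => Real.cos (y / 4)) (-Real.sin (x / 4) * (1 / 4)) x :=
    (quarter_deriv x).cos
  have t1 := (((c2.fun_mul p2').fun_mul p4).mul_const (a / 2))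
  have t2 := (((c4.fun_mul p2).fun_mul p4').mul_const (b / 4))
  have := t1.add t2
  unfold gg1 gg2
  exact this.congr_deriv (by ring)

lemma key (κ x : ℝ) (hκ4 : 4 < κ) (hx0 : 0 < x) (hx2 : x < 2 * π) :
    κ / 2 * gg2 (1 - 6 / κ) (8 / κ - 1) x
      + Real.cot (x / 2) * gg1 (1 - 6 / κ) (8 / κ - 1) x
      - (6 - κ) / (4 * κ) * gg (1 - 6 / κ) (8 / κ - 1) x / Real.sin (x / 2) ^ 2
    = (16 - κ ^ 2) / (32 * κ) * gg (1 - 6 / κ) (8 / κ - 1) x := by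
  have hκ : (κ : ℝ) ≠ 0 := by positivity
  have hT : 0 < Real.sin (x / 4) :=
    Real.sin_pos_of_pos_of_lt_pi (by linarith) (by nlinarith [Real.pi_pos])
  have hD : 0 < Real.cos (x / 4) := by
    apply Real.cos_pos_of_mem_Ioo
    constructor <;> nlinarith [Real.pi_pos]
  have hS : 0 < Real.sin (x / 2) :=
    Real.sin_pos_of_pos_of_lt_pi (by linarith) (by linarith)
  have pyth : Real.sin (x / 4) ^ 2 + Real.cos (x / 4) ^ 2 = 1 := Real.sin_sq_add_cos_sq _
  have e1 : Real.sin (x / 2) ^ (1 - 6 / κ - 1)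
      = Real.sin (x / 2) ^ (1 - 6 / κ) / Real.sin (x / 2) := Real.rpow_sub_one hS.ne' _
  have e2 : Real.sin (x / 2) ^ (1 - 6 / κ - 1 - 1)
      = Real.sin (x / 2) ^ (1 - 6 / κ) / Real.sin (x / 2) / Real.sin (x / 2) := by
    rw [Real.rpow_sub_one hS.ne', e1]
  have f1 : Real.sin (x / 4) ^ (8 / κ - 1 - 1)
      = Real.sin (x / 4) ^ (8 / κ - 1) / Real.sin (x / 4) := Real.rpow_sub_one hT.ne' _
  have f2 : Real.sin (x / 4) ^ (8 / κ - 1 - 1 - 1)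
      = Real.sin (x / 4) ^ (8 / κ - 1) / Real.sin (x / 4) / Real.sin (x / 4) := by
    rw [Real.rpow_sub_one hT.ne', f1]
  have hhalf : x / 2 = 2 * (x / 4) := by ring
  have hSd : Real.sin (x / 2) = 2 * Real.sin (x / 4) * Real.cos (x / 4) := by
    rw [hhalf, Real.sin_two_mul]
  have hC : Real.cos (x / 2) = 1 - 2 * Real.sin (x / 4) ^ 2 := by
    rw [hhalf, Real.cos_two_mul]; linarith [pyth]
  unfold gg gg1 gg2
  rw [Real.cot_eq_cos_div_sin, e2, e1, f2, f1, hSd, hC]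
  set s := Real.sin (x / 4)
  set d := Real.cos (x / 4)
  set A := (2 * s * d) ^ (1 - 6 / κ) with hA
  set B := s ^ (8 / κ - 1) with hB
  field_simp
  ring_nf
  linear_combination (A * B * (-12288 * κ * d ^ 2 + 1024 * κ ^ 2 * d ^ 2 + 32768 * d ^ 2
      - 4096 * κ * s ^ 2 + 24576 * s ^ 2)) * pyth

/-- for `κ ∈ (4,6]`, the function
`G(θ₁,θ₂) = (sin((θ₂−θ₁)/2))^(1−6/κ) · (sin((θ₂−θ₁)/4))^(8/κ−1)` is positive on `𝒳₂` and
satisfies the radial BPZ system with constant `ℵ = (16−κ²)/(32κ)`. -/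
theorem stmt1 (κ : ℝ) (hκ4 : 4 < κ) (hκ6 : κ ≤ 6)
    (G : ℝ → ℝ → ℝ)
    (hG : ∀ θ₁ θ₂ : ℝ, G θ₁ θ₂
      = Real.sin ((θ₂ - θ₁) / 2) ^ (1 - 6 / κ) * Real.sin ((θ₂ - θ₁) / 4) ^ (8 / κ - 1)) :
    (∀ θ₁ θ₂ : ℝ, θ₁ < θ₂ → θ₂ < θ₁ + 2 * π → 0 < G θ₁ θ₂)
    ∧ RadialBPZ₂ κ ((16 - κ ^ 2) / (32 * κ)) G := by
  have hsin : ∀ x : ℝ, 0 < x → x < 2 * π →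
      0 < Real.sin (x / 2) ∧ 0 < Real.sin (x / 4) := by
    intro x hx0 hx2
    exact ⟨Real.sin_pos_of_pos_of_lt_pi (by linarith) (by linarith),
      Real.sin_pos_of_pos_of_lt_pi (by linarith) (by nlinarith [Real.pi_pos])⟩
  have hGgg : ∀ θ₁ θ₂ : ℝ, G θ₁ θ₂ = gg (1 - 6 / κ) (8 / κ - 1) (θ₂ - θ₁) := by
    intro θ₁ θ₂; rw [hG, gg]
  have hpos : ∀ θ₁ θ₂ : ℝ, θ₁ < θ₂ → θ₂ < θ₁ + 2 * π → 0 < G θ₁ θ₂ := by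
    intro θ₁ θ₂ h1 h2
    obtain ⟨hS, hT⟩ := hsin (θ₂ - θ₁) (by linarith) (by linarith)
    rw [hGgg]
    exact mul_pos (Real.rpow_pos_of_pos hS _) (Real.rpow_pos_of_pos hT _)
  refine ⟨hpos, ?_⟩
  have key2 : ∀ θ₁ t : ℝ, θ₁ < t → t < θ₁ + 2 * π →
      pderiv2 G θ₁ t = gg1 (1 - 6 / κ) (8 / κ - 1) (t - θ₁) := by
    intro θ₁ t h1 h2
    obtain ⟨hS, hT⟩ := hsin (t - θ₁) (by linarith) (by linarith)
    have h : HasDerivAt (fun s => gg (1 - 6 / κ) (8 / κ - 1) (s - θ₁))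
        (gg1 (1 - 6 / κ) (8 / κ - 1) (t - θ₁)) t :=
      (hasDerivAt_gg (1 - 6 / κ) (8 / κ - 1) hS.ne' hT.ne').comp_sub_const t θ₁
    unfold pderiv2
    have hfun : (fun s => G θ₁ s) = fun s => gg (1 - 6 / κ) (8 / κ - 1) (s - θ₁) :=
      funext fun s => hGgg θ₁ s
    rw [hfun]
    simpa using h.deriv
  have key1 : ∀ s' θ₂ : ℝ, s' < θ₂ → θ₂ < s' + 2 * π →
      pderiv1 G s' θ₂ = -gg1 (1 - 6 / κ) (8 / κ - 1) (θ₂ - s') := by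
    intro s' θ₂ h1 h2
    obtain ⟨hS, hT⟩ := hsin (θ₂ - s') (by linarith) (by linarith)
    have h : HasDerivAt (fun s => gg (1 - 6 / κ) (8 / κ - 1) (θ₂ - s))
        (-gg1 (1 - 6 / κ) (8 / κ - 1) (θ₂ - s')) s' :=
      (hasDerivAt_gg (1 - 6 / κ) (8 / κ - 1) hS.ne' hT.ne').comp_const_sub θ₂ s' 
    unfold pderiv1
    have hfun : (fun s => G s θ₂) = fun s => gg (1 - 6 / κ) (8 / κ - 1) (θ₂ - s) :=
      funext fun s => hGgg s θ₂
    rw [hfun]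
    simpa using h.deriv
  intro θ₁ θ₂ h1 h2
  obtain ⟨hS, hT⟩ := hsin (θ₂ - θ₁) (by linarith) (by linarith)
  have hx0 : (0 : ℝ) < θ₂ - θ₁ := by linarith
  have hx2 : θ₂ - θ₁ < 2 * π := by linarith
  have hp22 : pderiv22 G θ₁ θ₂ = gg2 (1 - 6 / κ) (8 / κ - 1) (θ₂ - θ₁) := by
    unfold pderiv22
    have hev : (fun t => pderiv2 G θ₁ t) =ᶠ[nhds θ₂]
        fun t => gg1 (1 - 6 / κ) (8 / κ - 1) (t - θ₁) := by
      filter_upwards [Ioo_mem_nhds h1 h2] with t ht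
      exact key2 θ₁ t ht.1 ht.2
    rw [hev.deriv_eq]
    have h : HasDerivAt (fun t => gg1 (1 - 6 / κ) (8 / κ - 1) (t - θ₁))
        (gg2 (1 - 6 / κ) (8 / κ - 1) (θ₂ - θ₁)) θ₂ :=
      (hasDerivAt_gg1 (1 - 6 / κ) (8 / κ - 1) hS.ne' hT.ne').comp_sub_const θ₂ θ₁
    simpa using h.deriv
  have hp11 : pderiv11 G θ₁ θ₂ = gg2 (1 - 6 / κ) (8 / κ - 1) (θ₂ - θ₁) := by
    unfold pderiv11
    have hev : (fun s => pderiv1 G s θ₂) =ᶠ[nhds θ₁]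
        fun s => -gg1 (1 - 6 / κ) (8 / κ - 1) (θ₂ - s) := by
      filter_upwards [Ioo_mem_nhds (show θ₂ - 2 * π < θ₁ by linarith) h1] with t ht
      exact key1 t θ₂ ht.2 (by linarith [ht.1])
    rw [hev.deriv_eq]
    have h : HasDerivAt (fun s => -gg1 (1 - 6 / κ) (8 / κ - 1) (θ₂ - s))
        (-(-gg2 (1 - 6 / κ) (8 / κ - 1) (θ₂ - θ₁))) θ₁ :=
      ((hasDerivAt_gg1 (1 - 6 / κ) (8 / κ - 1) hS.ne' hT.ne').comp_const_sub θ₂ θ₁).neg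
    simpa using h.deriv
  have hkey := key κ (θ₂ - θ₁) hκ4 hx0 hx2
  constructor
  · rw [hp11, key2 θ₁ θ₂ h1 h2, hGgg]
    exact hkey
  · rw [hp22, key1 θ₁ θ₂ h1 h2, hGgg]
    have hneg : (θ₁ - θ₂) / 2 = -((θ₂ - θ₁) / 2) := by ring
    have hcot : Real.cot (-((θ₂ - θ₁) / 2)) = -Real.cot ((θ₂ - θ₁) / 2) := by
      rw [Real.cot_eq_cos_div_sin, Real.cot_eq_cos_div_sin, Real.cos_neg, Real.sin_neg, div_neg]
    rw [hneg, hcot, Real.sin_neg]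
    linear_combination hkey
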